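/- The canonical gate Can(a,b,c) = exp(-i(π/2)(a XX + b YY + c ZZ)) is equal to the 4×4 matrix with entries: (1,1) and (4,4) entries e^{-icπ/2} cos((a−b)π/2); (1,4) and (4,1) entries −i e^{-icπ/2} sin((a−b)π/2); (2,2) and (3,3) entries e^{icπ/2} cos((a+b)π/2); (2,3) and (3,2) entries −i e^{icπ/2} sin((a+b)π/2); all other entries zero. -/

import Mathlib

set_option maxHeartbeats 1000000


open Matrix Kronecker NormedSpace

noncomputable section

def PX : Matrix (Fin 2) (Fin 2) ℂ := !![0, 1; 1, 0]
def PY : Matrix (Fin 2) (Fin 2) ℂ := !![0, -Complex.I; Complex.I, 0]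
def PZ : Matrix (Fin 2) (Fin 2) ℂ := !![1, 0; 0, -1]

/-- The canonical two-qubit gate `Can(a,b,c) = exp(-i(π/2)(a X⊗X + b Y⊗Y + c Z⊗Z))`. -/
def Can (a b c : ℝ) : Matrix (Fin 2 × Fin 2) (Fin 2 × Fin 2) ℂ :=
  NormedSpace.exp ((-(Real.pi / 2 : ℂ) * Complex.I) •
    ((a : ℂ) • (PX ⊗ₖ PX) + (b : ℂ) • (PY ⊗ₖ PY) + (c : ℂ) • (PZ ⊗ₖ PZ)))

lemma reindex_exp {m n : Type*} [Fintype m] [DecidableEq m] [Fintype n] [DecidableEq n]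
    (e : m ≃ n) (A : Matrix m m ℂ) :
    Matrix.reindex e e (exp A) = exp (Matrix.reindex e e A) := by
  letI : SeminormedRing (Matrix m m ℂ) := Matrix.linftyOpSemiNormedRing
  letI : NormedRing (Matrix m m ℂ) := Matrix.linftyOpNormedRing
  letI : NormedAlgebra ℂ (Matrix m m ℂ) := Matrix.linftyOpNormedAlgebra
  letI : SeminormedRing (Matrix n n ℂ) := Matrix.linftyOpSemiNormedRing
  letI : NormedRing (Matrix n n ℂ) := Matrix.linftyOpNormedRing
  letI : NormedAlgebra ℂ (Matrix n n ℂ) := Matrix.linftyOpNormedAlgebra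
  letI : NormedAlgebra ℚ (Matrix m m ℂ) := Matrix.linftyOpNormedAlgebra
  letI : NormedAlgebra ℚ (Matrix n n ℂ) := Matrix.linftyOpNormedAlgebra
  exact map_exp (Matrix.reindexAlgEquiv ℂ ℂ e).toRingEquiv.toRingHom
    ((Matrix.reindexAlgEquiv ℂ ℂ e).toLinearMap.continuous_of_finiteDimensional) A

def Pmat : Matrix (Fin 4) (Fin 4) ℂ := !![1,0,0,1; 0,1,1,0; 0,1,-1,0; 1,0,0,-1]

lemma Pmat_mul : Pmat * ((1/2 : ℂ) • Pmat) = 1 := by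
  ext i j
  fin_cases i <;> fin_cases j <;>
    simp [Pmat, Matrix.mul_apply, Fin.sum_univ_four] <;> ring

lemma Pmat_mul' : ((1/2 : ℂ) • Pmat) * Pmat = 1 := by
  ext i j
  fin_cases i <;> fin_cases j <;>
    simp [Pmat, Matrix.mul_apply, Fin.sum_univ_four] <;> ring

def Pu : (Matrix (Fin 4) (Fin 4) ℂ)ˣ := ⟨Pmat, (1/2 : ℂ) • Pmat, Pmat_mul, Pmat_mul'⟩

theorem can_matrix_entries (a b c : ℝ) :
    Matrix.reindex finProdFinEquiv finProdFinEquiv (Can a b c) =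
      !![Complex.exp (-(c * Real.pi / 2 : ℂ) * Complex.I) * Real.cos ((a - b) * Real.pi / 2), 0,
            0, -Complex.I * Complex.exp (-(c * Real.pi / 2 : ℂ) * Complex.I) *
              Real.sin ((a - b) * Real.pi / 2);
          0, Complex.exp ((c * Real.pi / 2 : ℂ) * Complex.I) * Real.cos ((a + b) * Real.pi / 2),
            -Complex.I * Complex.exp ((c * Real.pi / 2 : ℂ) * Complex.I) *
              Real.sin ((a + b) * Real.pi / 2), 0;
          0, -Complex.I * Complex.exp ((c * Real.pi / 2 : ℂ) * Complex.I) *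
              Real.sin ((a + b) * Real.pi / 2),
            Complex.exp ((c * Real.pi / 2 : ℂ) * Complex.I) * Real.cos ((a + b) * Real.pi / 2), 0;
          -Complex.I * Complex.exp (-(c * Real.pi / 2 : ℂ) * Complex.I) *
              Real.sin ((a - b) * Real.pi / 2), 0, 0,
            Complex.exp (-(c * Real.pi / 2 : ℂ) * Complex.I) * Real.cos ((a - b) * Real.pi / 2)] := by
  set θ : ℂ := -(Real.pi / 2 : ℂ) * Complex.I with hθ
  set w : Fin 4 → ℂ := ![θ*((c:ℂ)+a-b), θ*((a:ℂ)+b-c), θ*(-((a:ℂ)+b+c)), θ*((c:ℂ)-a+b)] with hw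
  have h0 : Matrix.reindex finProdFinEquiv finProdFinEquiv
      (θ • ((a : ℂ) • (PX ⊗ₖ PX) + (b : ℂ) • (PY ⊗ₖ PY) + (c : ℂ) • (PZ ⊗ₖ PZ)))
      = θ • !![(c:ℂ), 0, 0, (a:ℂ)-b; 0, -(c:ℂ), (a:ℂ)+b, 0;
               0, (a:ℂ)+b, -(c:ℂ), 0; (a:ℂ)-b, 0, 0, (c:ℂ)] := by
    ext i j
    fin_cases i <;> fin_cases j <;>
      simp [PX, PY, PZ, Matrix.reindex_apply, Matrix.submatrix_apply, finProdFinEquiv,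
        kroneckerMap_apply, Fin.divNat, Fin.modNat,
        show ((3:Fin 4):ℕ)=3 from rfl, show ((2:Fin 4):ℕ)=2 from rfl,
        show ((1:Fin 4):ℕ)=1 from rfl, show ((0:Fin 4):ℕ)=0 from rfl] <;> ring
  have h1 : Matrix.reindex finProdFinEquiv finProdFinEquiv
      (θ • ((a : ℂ) • (PX ⊗ₖ PX) + (b : ℂ) • (PY ⊗ₖ PY) + (c : ℂ) • (PZ ⊗ₖ PZ)))
      = (Pu : Matrix (Fin 4) (Fin 4) ℂ) * Matrix.diagonal w * (↑Pu⁻¹ : Matrix (Fin 4) (Fin 4) ℂ) := by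
    rw [h0]
    ext i j
    fin_cases i <;> fin_cases j <;>
      simp [Pu, Pmat, hw, Matrix.mul_apply, Fin.sum_univ_four, Matrix.diagonal_apply, Fin.ext_iff, Matrix.vecMul_diagonal] <;> ring
  have hdiag : Matrix.diagonal (exp w) =
      !![Complex.exp (w 0), 0, 0, 0; 0, Complex.exp (w 1), 0, 0;
         0, 0, Complex.exp (w 2), 0; 0, 0, 0, Complex.exp (w 3)] := by
    ext i j
    fin_cases i <;> fin_cases j <;>
      simp [Matrix.diagonal_apply, Pi.coe_exp, Complex.exp_eq_exp_ℂ, Matrix.vecHead, Matrix.vecTail]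
  rw [Can, reindex_exp, h1, Matrix.exp_units_conj, Matrix.exp_diagonal, hdiag]
  ext i j
  fin_cases i <;> fin_cases j <;>
    · simp [Pu, Pmat, hw, hθ, Matrix.mul_apply, Fin.sum_univ_four,
        Complex.ofReal_cos, Complex.ofReal_sin, Complex.cos, Complex.sin,
        Matrix.vecHead, Matrix.vecTail]
      all_goals
        ring_nf
        simp only [Complex.exp_add, Complex.I_sq]
        ring
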